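/- If (E_n)_{n≥0} is an increasing sequence of events in a probability space with E_0 = ∅ and ∑_{n≥1} P(E_n | E_{n−1}^c) = ∞ (where terms with P(E_{n−1}^c)=0 are interpreted as 0 and the sum still diverges), then P(⋃_{n≥1} E_n) = 1. -/

import Mathlib

open MeasureTheory

/-- Borel–Cantelli counterpart: if `(E_n)` is an increasing sequence of events with
`E_0 = ∅` and `∑_{n≥1} P(E_n | E_{n-1}ᶜ) = ∞`, then `P(⋃ E_n) = 1`. -/
theorem stmt5 {Ω : Type*} [MeasurableSpace Ω] (μ : Measure Ω) [IsProbabilityMeasure μ]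
    (E : ℕ → Set Ω) (hmeas : ∀ n, MeasurableSet (E n)) (h0 : E 0 = ∅)
    (hmono : Monotone E)
    (hdiv : ∑' n : ℕ, μ (E (n + 1) ∩ (E n)ᶜ) / μ ((E n)ᶜ) = ⊤) :
    μ (⋃ n, E n) = 1 := by
  set a : ℕ → ENNReal := fun n => μ ((E n)ᶜ) with ha
  have hat : ∀ m n, m ≤ n → a n ≤ a m := fun m n h =>
    measure_mono (Set.compl_subset_compl.2 (hmono h))
  have hfin : ∀ n, a n ≠ ⊤ := fun n => measure_ne_top μ _
  have hstep : ∀ n, μ (E (n + 1) ∩ (E n)ᶜ) = a n - a (n + 1) := by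
    intro n
    have hsub : (E (n + 1))ᶜ ⊆ (E n)ᶜ := Set.compl_subset_compl.2 (hmono (Nat.le_succ n))
    have hset : (E n)ᶜ \ (E (n + 1))ᶜ = E (n + 1) ∩ (E n)ᶜ := by
      ext x; simp [Set.diff_eq, and_comm]
    rw [← hset, measure_diff hsub (hmeas (n + 1)).compl.nullMeasurableSet (hfin (n + 1))]
  have hinf : ⨅ n, a n = 0 := by
    by_contra hL
    have hLpos : 0 < ⨅ n, a n := pos_iff_ne_zero.2 hL
    set L := ⨅ n, a n with hLdef
    have hle : ∀ n, L ≤ a n := fun n => iInf_le a n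
    have hbound : ∀ n, μ (E (n + 1) ∩ (E n)ᶜ) / μ ((E n)ᶜ) ≤ (a n - a (n + 1)) * L⁻¹ := by
      intro n
      rw [hstep n]
      calc (a n - a (n + 1)) / a n ≤ (a n - a (n + 1)) / L :=
            ENNReal.div_le_div le_rfl (hle n)
        _ = (a n - a (n + 1)) * L⁻¹ := by rw [ENNReal.div_eq_inv_mul, mul_comm]
    have htel : ∀ N, ∑ i ∈ Finset.range N, (a i - a (i + 1)) ≤ a 0 := by
      intro N
      have : ∑ i ∈ Finset.range N, (a i - a (i + 1)) = a 0 - a N := by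
        induction N with
        | zero => simp
        | succ N ih =>
          rw [Finset.sum_range_succ, ih,
            tsub_add_tsub_cancel (hat 0 N (Nat.zero_le N)) (hat N (N + 1) (Nat.le_succ N))]
      rw [this]; exact tsub_le_self
    have hsum : ∑' n, (a n - a (n + 1)) ≤ a 0 :=
      ENNReal.tsum_le_of_sum_range_le htel
    have hfinal : ∑' n : ℕ, μ (E (n + 1) ∩ (E n)ᶜ) / μ ((E n)ᶜ) ≤ a 0 * L⁻¹ := by
      calc ∑' n : ℕ, μ (E (n + 1) ∩ (E n)ᶜ) / μ ((E n)ᶜ)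
          ≤ ∑' n, (a n - a (n + 1)) * L⁻¹ := ENNReal.tsum_le_tsum hbound
        _ = (∑' n, (a n - a (n + 1))) * L⁻¹ := ENNReal.tsum_mul_right
        _ ≤ a 0 * L⁻¹ := mul_le_mul_left hsum _
    rw [hdiv] at hfinal
    exact absurd hfinal (by
      simp only [top_le_iff]
      exact ENNReal.mul_ne_top (hfin 0) (ENNReal.inv_ne_top.2 hLpos.ne'))
  have hcompl : μ ((⋃ n, E n)ᶜ) = 0 := by
    have : μ ((⋃ n, E n)ᶜ) ≤ ⨅ n, a n := by
      refine le_iInf fun n => measure_mono ?_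
      rw [Set.compl_iUnion]
      exact Set.iInter_subset _ n
    rw [hinf] at this
    exact le_antisymm this zero_le
  have hm : MeasurableSet (⋃ n, E n) := MeasurableSet.iUnion hmeas
  rwa [← prob_compl_eq_zero_iff hm]
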